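/- arXiv:2505.14908 — 2 statements merged into one kernel-verified Lean document; each statement's English description precedes it below -/
import Mathlib

section
/- Let H = H₁ ∨ H₂ where H₁ has l vertices and H₂ has n−l vertices with maximum degree d, and suppose λ(H) > d. If y is a Perron eigenvector of H normalized so its maximum entry is 1, then every entry of y at a vertex of H₂ is at most l/(λ(H) − d). Moreover, since K_{l,n−l} ⊆ H, this is at most l/(√(l(n−l)) − d) whenever √(l(n−l)) > d. -/
open scoped Classical

/-- The adjacency spectral radius (largest adjacency eigenvalue) of a finite simple graph. -/
noncomputable def specRad {V : Type*} [Fintype V] (G : SimpleGraph V) : ℝ :=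
  sSup {μ : ℝ | Module.End.HasEigenvalue (Matrix.toLin' (G.adjMatrix ℝ)) μ}

/-- The join `G ∨ H` of two graphs. -/
def graphJoin {α β : Type*} (G : SimpleGraph α) (H : SimpleGraph β) : SimpleGraph (α ⊕ β) where
  Adj x y :=
    match x, y with
    | Sum.inl a, Sum.inl b => G.Adj a b
    | Sum.inr a, Sum.inr b => H.Adj a b
    | Sum.inl _, Sum.inr _ => True
    | Sum.inr _, Sum.inl _ => True
  symm := by
    constructor
    rintro (a|a) (b|b) h
    · exact G.adj_symm h
    · trivial
    · trivial
    · exact H.adj_symm h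
  loopless := by
    constructor
    rintro (a|a) h
    · exact G.loopless.irrefl a h
    · exact H.loopless.irrefl a h

/-- Let `H = H₁ ∨ H₂` where `H₁` has `l` vertices and `H₂` has `n − l` vertices with
maximum degree `d`, and suppose `λ(H) > d`.  If `y` is a Perron eigenvector of `H`
normalized so its maximum entry is `1`, then every entry of `y` at a vertex of `H₂` is
at most `l / (λ(H) − d)`; moreover this is at most `l / (√(l(n−l)) − d)` whenever
`√(l(n−l)) > d`. -/
theorem perron_entry_bound_join {α β : Type*} [Fintype α] [Fintype β]
    (H₁ : SimpleGraph α) (H₂ : SimpleGraph β) (l n d : ℕ)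
    (hα : Fintype.card α = l) (hβ : Fintype.card β = n - l) (hln : l ≤ n)
    (hd : ∀ v, H₂.degree v ≤ d)
    (hlam : (d : ℝ) < specRad (graphJoin H₁ H₂))
    (y : α ⊕ β → ℝ)
    (heig : ((graphJoin H₁ H₂).adjMatrix ℝ).mulVec y = specRad (graphJoin H₁ H₂) • y)
    (hpos : ∀ v, 0 < y v) (hle : ∀ v, y v ≤ 1) (hmax : ∃ v, y v = 1) :
    (∀ v : β, y (Sum.inr v) ≤ (l : ℝ) / (specRad (graphJoin H₁ H₂) - d)) ∧
    ((d : ℝ) < Real.sqrt ((l : ℝ) * ((n : ℝ) - l)) →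
      ∀ v : β, y (Sum.inr v) ≤ (l : ℝ) / (Real.sqrt ((l : ℝ) * ((n : ℝ) - l)) - d)) := by
  classical
  set lam := specRad (graphJoin H₁ H₂) with hlamdef
  -- eigen-equation at a `β` vertex
  have keyR : ∀ v : β, lam * y (Sum.inr v) =
      (∑ a : α, y (Sum.inl a)) + ∑ b : β, if H₂.Adj v b then y (Sum.inr b) else 0 := by
    intro v
    have := congrFun heig (Sum.inr v)
    simp only [Matrix.mulVec, dotProduct, SimpleGraph.adjMatrix_apply,
      Fintype.sum_sum_type, Pi.smul_apply, smul_eq_mul] at this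
    have e2 : ∀ b, (graphJoin H₁ H₂).Adj (Sum.inr v) (Sum.inr b) ↔ H₂.Adj v b := fun _ => Iff.rfl
    have e3 : ∀ a, (graphJoin H₁ H₂).Adj (Sum.inr v) (Sum.inl a) := fun _ => trivial
    rw [← this]; congr 1
    · exact Finset.sum_congr rfl fun a _ => by simp [e3]
    · refine Finset.sum_congr rfl fun b _ => ?_
      by_cases h : H₂.Adj v b <;> simp [h, e2]
  -- eigen-equation at an `α` vertex
  have keyL : ∀ a : α, lam * y (Sum.inl a) =
      (∑ a' : α, if H₁.Adj a a' then y (Sum.inl a') else 0) + ∑ b : β, y (Sum.inr b) := by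
    intro a
    have := congrFun heig (Sum.inl a)
    simp only [Matrix.mulVec, dotProduct, SimpleGraph.adjMatrix_apply,
      Fintype.sum_sum_type, Pi.smul_apply, smul_eq_mul] at this
    have e1 : ∀ b, (graphJoin H₁ H₂).Adj (Sum.inl a) (Sum.inl b) ↔ H₁.Adj a b := fun _ => Iff.rfl
    have e4 : ∀ b, (graphJoin H₁ H₂).Adj (Sum.inl a) (Sum.inr b) := fun _ => trivial
    rw [← this]; congr 1
    · refine Finset.sum_congr rfl fun b _ => ?_
      by_cases h : H₁.Adj a b <;> simp [h, e1]
    · exact Finset.sum_congr rfl fun b _ => by simp [e4]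
  have hld : (0:ℝ) < lam - d := by linarith
  -- first part
  have part1 : ∀ v : β, y (Sum.inr v) ≤ (l : ℝ) / (lam - d) := by
    intro v
    by_cases hne : Nonempty β
    · obtain ⟨v₀, -, hv₀⟩ := Finset.exists_max_image (Finset.univ : Finset β)
        (fun b => y (Sum.inr b)) ⟨Classical.arbitrary β, Finset.mem_univ _⟩
      have hM0 : 0 < y (Sum.inr v₀) := hpos _
      have hSle : (∑ a : α, y (Sum.inl a)) ≤ (l : ℝ) := by
        calc (∑ a : α, y (Sum.inl a)) ≤ ∑ _a : α, (1:ℝ) :=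
              Finset.sum_le_sum fun a _ => hle _
          _ = (l : ℝ) := by simp [hα]
      have hTle : (∑ b : β, if H₂.Adj v₀ b then y (Sum.inr b) else 0)
          ≤ (d : ℝ) * y (Sum.inr v₀) := by
        calc (∑ b : β, if H₂.Adj v₀ b then y (Sum.inr b) else 0)
            ≤ ∑ b : β, if H₂.Adj v₀ b then y (Sum.inr v₀) else 0 := by
              refine Finset.sum_le_sum fun b _ => ?_
              by_cases h : H₂.Adj v₀ b <;> simp [h, hv₀ b (Finset.mem_univ b)]
          _ = (H₂.degree v₀ : ℝ) * y (Sum.inr v₀) := by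
              rw [Finset.sum_ite, Finset.sum_const, Finset.sum_const]
              simp [SimpleGraph.degree, SimpleGraph.neighborFinset_eq_filter, nsmul_eq_mul]
          _ ≤ (d : ℝ) * y (Sum.inr v₀) := by
              have := hd v₀
              have : (H₂.degree v₀ : ℝ) ≤ (d : ℝ) := by exact_mod_cast this
              nlinarith
      have hineq : lam * y (Sum.inr v₀) ≤ (l : ℝ) + (d : ℝ) * y (Sum.inr v₀) := by
        rw [keyR v₀]; linarith
      have hMle : y (Sum.inr v₀) ≤ (l : ℝ) / (lam - d) := by
        rw [le_div_iff₀ hld]; nlinarith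
      exact le_trans (hv₀ v (Finset.mem_univ v)) hMle
    · exact absurd ⟨v⟩ hne
  refine ⟨part1, ?_⟩
  intro hs v
  -- show l > 0 (else hs is contradictory)
  rcases Nat.eq_zero_or_pos l with hl0 | hlpos
  · rw [hl0] at hs
    simp at hs
    exact absurd hs (not_lt.2 (Nat.cast_nonneg d))
  have : Nonempty α := by
    rw [← Fintype.card_pos_iff, hα]; exact hlpos
  -- sums
  set S := ∑ a : α, y (Sum.inl a) with hS
  set T := ∑ b : β, y (Sum.inr b) with hT
  have hSpos : 0 < S := Finset.sum_pos (fun a _ => hpos _) (by simpa using Finset.univ_nonempty)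
  have hTpos : 0 < T := by
    have : Nonempty β := ⟨v⟩
    exact Finset.sum_pos (fun b _ => hpos _) (by simpa using Finset.univ_nonempty)
  have h1 : (l : ℝ) * T ≤ lam * S := by
    have : ∀ a : α, T ≤ lam * y (Sum.inl a) := by
      intro a
      rw [keyL a]
      have : (0:ℝ) ≤ ∑ a' : α, if H₁.Adj a a' then y (Sum.inl a') else 0 := by
        refine Finset.sum_nonneg fun a' _ => ?_
        by_cases h : H₁.Adj a a' <;> simp [h, le_of_lt (hpos _)]
      linarith
    calc (l : ℝ) * T = ∑ _a : α, T := by simp [hα, mul_comm]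
      _ ≤ ∑ a : α, lam * y (Sum.inl a) := Finset.sum_le_sum fun a _ => this a
      _ = lam * S := by rw [hS, Finset.mul_sum]
  have h2 : ((n : ℝ) - l) * S ≤ lam * T := by
    have hcard : ((Fintype.card β : ℕ) : ℝ) = (n : ℝ) - l := by
      rw [hβ, Nat.cast_sub hln]
    have : ∀ b : β, S ≤ lam * y (Sum.inr b) := by
      intro b
      rw [keyR b]
      have : (0:ℝ) ≤ ∑ b' : β, if H₂.Adj b b' then y (Sum.inr b') else 0 := by
        refine Finset.sum_nonneg fun b' _ => ?_
        by_cases h : H₂.Adj b b' <;> simp [h, le_of_lt (hpos _)]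
      linarith
    calc ((n : ℝ) - l) * S = ∑ _b : β, S := by
          rw [← hcard]; simp [mul_comm]
      _ ≤ ∑ b : β, lam * y (Sum.inr b) := Finset.sum_le_sum fun b _ => this b
      _ = lam * T := by rw [hT, Finset.mul_sum]
  have hlamnn : (0:ℝ) ≤ lam := le_trans (Nat.cast_nonneg d) (le_of_lt hlam)
  have hsq : (l : ℝ) * ((n : ℝ) - l) ≤ lam ^ 2 := by
    nlinarith [mul_pos hSpos hTpos]
  have hsqrt : Real.sqrt ((l : ℝ) * ((n : ℝ) - l)) ≤ lam := by
    calc Real.sqrt ((l : ℝ) * ((n : ℝ) - l)) ≤ Real.sqrt (lam ^ 2) := Real.sqrt_le_sqrt hsq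
      _ = lam := by rw [Real.sqrt_sq hlamnn]
  have hsd : (0:ℝ) < Real.sqrt ((l : ℝ) * ((n : ℝ) - l)) - d := by linarith
  calc y (Sum.inr v) ≤ (l : ℝ) / (lam - d) := part1 v
    _ ≤ (l : ℝ) / (Real.sqrt ((l : ℝ) * ((n : ℝ) - l)) - d) := by
        apply div_le_div_of_nonneg_left (Nat.cast_nonneg l) hsd
        linarith
end

section
/- Let T be a tree with bipartition {A,B}, |A| = l+1 ≤ |B|, and suppose P ⊆ A with |P| = p is mapped into the side H₂ of a join H₁ ∨ H₂, where |V(H₁)| = l, Δ(H₂) ≤ δ−1, at most one vertex of H₂ has degree δ−1, and every vertex of A has degree at least δ in T. Then at least p vertices of N_T(P) must be mapped into V(H₁), and consequently p ≤ l. -/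
open scoped Classical

open Finset SimpleGraph in
lemma tree_nbhd_bound {V : Type*} [Fintype V] (T : SimpleGraph V) (hT : T.IsTree)
    (r : V) (δ : ℕ) (P : Finset V) (hPne : P.Nonempty) (hr : r ∉ P)
    (hdeg : ∀ u ∈ P, δ ≤ T.degree u) :
    P.card * (δ - 1) + 1 ≤ (Finset.univ.filter fun w => ∃ u ∈ P, T.Adj u w).card := by
  choose f hf hf' using fun v => hT.existsUnique_path v r
  set d : V → ℕ := fun w => (f w).length with hd
  set pa : V → V := fun w => (f w).getVert 1 with hpa
  have hnil : ∀ w, w ≠ r → ¬ (f w).Nil := fun w h => Walk.not_nil_of_ne h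
  have hadjpa : ∀ w, w ≠ r → T.Adj w (pa w) := fun w h => (f w).adj_snd (hnil w h)
  have hdpa : ∀ w, w ≠ r → d (pa w) + 1 = d w := by
    intro w h
    have ht : (f w).tail = f (pa w) := hf' (pa w) ((f w).tail) ((hf w).tail)
    have h2 := Walk.length_tail_add_one (hnil w h)
    rw [ht] at h2
    exact h2
  have factC : ∀ u w, T.Adj u w → w ≠ pa u → pa w = u ∧ d w = d u + 1 := by
    intro u w hadj hwpa
    have hws : w ∉ (f u).support := by
      intro hw
      have hcons : ((Walk.cons hadj Walk.nil) : T.Walk u w).IsPath := by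
        simp [Walk.cons_isPath_iff, hadj.ne]
      have ht : (f u).takeUntil w hw = Walk.cons hadj Walk.nil :=
        (hT.existsUnique_path u w).unique ((hf u).takeUntil hw) hcons
      have hspec := (f u).take_spec hw
      rw [ht] at hspec
      have h2 : pa u = w := by
        show (f u).getVert 1 = w
        rw [← hspec]
        simp
      exact hwpa h2.symm
    have hq : ((Walk.cons hadj.symm (f u)) : T.Walk w r).IsPath := by
      rw [Walk.cons_isPath_iff]; exact ⟨hf u, hws⟩
    have hfw : Walk.cons hadj.symm (f u) = f w := hf' w _ hq
    constructor
    · show (f w).getVert 1 = u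
      rw [← hfw]; simp
    · show (f w).length = (f u).length + 1
      rw [← hfw]; simp
  set C : V → Finset V := fun u => T.neighborFinset u \ {pa u} with hC
  have hCmem : ∀ u w, w ∈ C u ↔ T.Adj u w ∧ w ≠ pa u := by
    intro u w
    simp [hC, Finset.mem_sdiff, SimpleGraph.mem_neighborFinset]
  have hCcard : ∀ u ∈ P, δ - 1 ≤ (C u).card := by
    intro u hu
    have h1 : T.neighborFinset u ⊆ C u ∪ {pa u} := by
      intro x hx
      by_cases hx2 : x = pa u
      · simp [hx2]
      · simp only [Finset.mem_union]
        exact Or.inl ((hCmem u x).mpr ⟨(T.mem_neighborFinset u x).mp hx, hx2⟩)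
    have h2 := Finset.card_le_card h1
    have h3 := Finset.card_union_le (C u) ({pa u} : Finset V)
    have h4 := hdeg u hu
    have h5 : (T.neighborFinset u).card = T.degree u := T.card_neighborFinset_eq_degree u
    simp only [Finset.card_singleton] at h3
    omega
  have hCsub : ∀ u ∈ P, C u ⊆ Finset.univ.filter fun w => ∃ u ∈ P, T.Adj u w := by
    intro u hu w hw
    simp only [Finset.mem_filter, Finset.mem_univ, true_and]
    exact ⟨u, hu, ((hCmem u w).mp hw).1⟩
  have hCdisj : ∀ x ∈ P, ∀ y ∈ P, x ≠ y → Disjoint (C x) (C y) := by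
    intro x hx y hy hxy
    rw [Finset.disjoint_left]
    intro w hwx hwy
    obtain ⟨ha1, ha2⟩ := (hCmem x w).mp hwx
    obtain ⟨hb1, hb2⟩ := (hCmem y w).mp hwy
    have e1 := (factC x w ha1 ha2).1
    have e2 := (factC y w hb1 hb2).1
    exact hxy (e1.symm.trans e2)
  obtain ⟨u₀, hu₀, hmin⟩ := P.exists_min_image d hPne
  have hu₀r : u₀ ≠ r := fun h => hr (h ▸ hu₀)
  set w₀ := pa u₀ with hw₀def
  have hw₀ : w₀ ∈ Finset.univ.filter fun w => ∃ u ∈ P, T.Adj u w := by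
    simp only [Finset.mem_filter, Finset.mem_univ, true_and]
    exact ⟨u₀, hu₀, hadjpa u₀ hu₀r⟩
  have hw₀n : w₀ ∉ P.biUnion C := by
    intro h
    obtain ⟨u, hu, hwC⟩ := Finset.mem_biUnion.mp h
    obtain ⟨ha1, ha2⟩ := (hCmem u w₀).mp hwC
    have e1 := (factC u w₀ ha1 ha2).2
    have e2 : d w₀ + 1 = d u₀ := hdpa u₀ hu₀r
    have e3 := hmin u hu
    omega
  calc P.card * (δ - 1) + 1 ≤ (∑ u ∈ P, (C u).card) + 1 := by
        have h1 : ∑ _u ∈ P, (δ - 1) ≤ ∑ u ∈ P, (C u).card := Finset.sum_le_sum hCcard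
        rw [Finset.sum_const, smul_eq_mul] at h1
        omega
    _ = (P.biUnion C).card + 1 := by rw [Finset.card_biUnion hCdisj]
    _ = (insert w₀ (P.biUnion C)).card := (Finset.card_insert_of_notMem hw₀n).symm
    _ ≤ _ := by
        apply Finset.card_le_card
        intro x hx
        rcases Finset.mem_insert.mp hx with rfl | hx2
        · exact hw₀
        · obtain ⟨u, hu, hxC⟩ := Finset.mem_biUnion.mp hx2
          exact hCsub u hu hxC


lemma sum_deg_bound {β : Type*} [Fintype β] (H₂ : SimpleGraph β) (δ : ℕ)
    (hmax : ∀ v : β, H₂.degree v ≤ δ - 1)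
    (hone : ∀ u v : β, H₂.degree u = δ - 1 → H₂.degree v = δ - 1 → u = v)
    (S : Finset β) :
    ∑ b ∈ S, H₂.degree b ≤ (δ - 1) + (S.card - 1) * (δ - 2) := by
  by_cases hex : ∃ b₀ ∈ S, H₂.degree b₀ = δ - 1
  · obtain ⟨b₀, hb₀S, hb₀⟩ := hex
    rw [← Finset.sum_erase_add S _ hb₀S, hb₀]
    have h1 : ∑ b ∈ S.erase b₀, H₂.degree b ≤ (S.card - 1) * (δ - 2) := by
      have h2 : ∀ b ∈ S.erase b₀, H₂.degree b ≤ δ - 2 := by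
        intro b hb
        have h3 := hmax b
        have h4 : H₂.degree b ≠ δ - 1 := fun h => (Finset.mem_erase.mp hb).1 (hone b b₀ h hb₀)
        omega
      calc ∑ b ∈ S.erase b₀, H₂.degree b ≤ (S.erase b₀).card * (δ - 2) := by
            simpa using Finset.sum_le_card_nsmul _ _ _ h2
        _ = (S.card - 1) * (δ - 2) := by rw [Finset.card_erase_of_mem hb₀S]
    omega
  · push_neg at hex
    have h2 : ∀ b ∈ S, H₂.degree b ≤ δ - 2 := by
      intro b hb
      have h3 := hmax b
      have h4 := hex b hb
      omega
    calc ∑ b ∈ S, H₂.degree b ≤ S.card * (δ - 2) := by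
          simpa using Finset.sum_le_card_nsmul _ _ _ h2
      _ ≤ (δ - 1) + (S.card - 1) * (δ - 2) := by
          rcases Nat.eq_zero_or_pos S.card with h | h
          · simp [h]
          · obtain ⟨k, hk⟩ : ∃ k, S.card = k + 1 := ⟨S.card - 1, by omega⟩
            rw [hk]
            calc (k + 1) * (δ - 2) = k * (δ - 2) + (δ - 2) := by ring
              _ ≤ k * (δ - 2) + (δ - 1) := Nat.add_le_add_left (by omega) _
              _ = (δ - 1) + (k + 1 - 1) * (δ - 2) := by rw [Nat.add_sub_cancel]; ring

/-- Let `T` be a tree with bipartition `{A,B}`, `|A| = l+1 ≤ |B|`, each vertex of `A`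
of degree at least `δ` in `T`, and suppose an embedding of `T` into the join `H₁ ∨ H₂`
maps a subset `P ⊆ A` with `|P| = p` into the side `H₂`, where `|V(H₁)| = l`,
`Δ(H₂) ≤ δ−1`, and at most one vertex of `H₂` has degree `δ−1`.  Then at least `p`
vertices of `N_T(P)` are mapped into `V(H₁)`, and consequently `p ≤ l`. -/
theorem embedded_neighbors_forced_into_H1 {V α β : Type*} [Fintype V] [Fintype α] [Fintype β]
    (T : SimpleGraph V) (hT : T.IsTree) (l δ p : ℕ)
    (A : Finset V) (hbip : ∀ ⦃u v⦄, T.Adj u v → (u ∈ A ↔ v ∉ A))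
    (hA : A.card = l + 1) (hAB : A.card ≤ Aᶜ.card)
    (hδmin : ∀ v ∈ A, δ ≤ T.degree v)
    (H₁ : SimpleGraph α) (H₂ : SimpleGraph β) (hα : Fintype.card α = l)
    (hmax : ∀ v : β, H₂.degree v ≤ δ - 1)
    (hone : ∀ u v : β, H₂.degree u = δ - 1 → H₂.degree v = δ - 1 → u = v)
    (f : V → α ⊕ β) (hinj : Function.Injective f)
    (hhom : ∀ ⦃a b⦄, T.Adj a b → (graphJoin H₁ H₂).Adj (f a) (f b))
    (P : Finset V) (hPA : P ⊆ A) (hP : P.card = p)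
    (hPright : ∀ u ∈ P, ∃ b : β, f u = Sum.inr b) :
    p ≤ (Finset.univ.filter
          (fun w => (∃ u ∈ P, T.Adj u w) ∧ ∃ a : α, f w = Sum.inl a)).card ∧
    p ≤ l := by
  set W := Finset.univ.filter
      (fun w => (∃ u ∈ P, T.Adj u w) ∧ ∃ a : α, f w = Sum.inl a) with hWdef
  have hWl : W.card ≤ l := by
    have h1 : W.card = (W.image f).card := (Finset.card_image_of_injOn hinj.injOn).symm
    have h2 : W.image f ⊆ Finset.univ.image Sum.inl := by
      intro x hx
      obtain ⟨w, hw, rfl⟩ := Finset.mem_image.mp hx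
      obtain ⟨a, ha⟩ := (Finset.mem_filter.mp hw).2.2
      exact Finset.mem_image.mpr ⟨a, Finset.mem_univ a, ha.symm⟩
    have h3 := Finset.card_le_card h2
    rw [Finset.card_image_of_injective _ Sum.inl_injective, Finset.card_univ, hα] at h3
    omega
  rcases Nat.eq_zero_or_pos p with hp0 | hp1
  · exact ⟨hp0 ▸ Nat.zero_le _, hp0 ▸ Nat.zero_le _⟩
  suffices hpW : p ≤ W.card by exact ⟨hpW, hpW.trans hWl⟩
  have hPne : P.Nonempty := Finset.card_pos.mp (by omega)
  obtain ⟨u₁, hu₁⟩ := hPne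
  have hβ : Nonempty β := (hPright u₁ hu₁).elim fun b _ => ⟨b⟩
  set bu : V → β := fun u =>
    if h : ∃ b, f u = Sum.inr b then h.choose else Classical.arbitrary β with hbudef
  have hbuspec : ∀ u ∈ P, f u = Sum.inr (bu u) := by
    intro u hu
    have h := hPright u hu
    simp only [hbudef, dif_pos h]
    exact h.choose_spec
  have hBne : (Aᶜ : Finset V).Nonempty := by
    rw [← Finset.card_pos]; omega
  obtain ⟨r, hrB⟩ := hBne
  have hrP : r ∉ P := fun h => (Finset.mem_compl.mp hrB) (hPA h)
  set N := Finset.univ.filter (fun w => ∃ u ∈ P, T.Adj u w) with hNdef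
  set R := Finset.univ.filter
      (fun w => (∃ u ∈ P, T.Adj u w) ∧ ∃ b : β, f w = Sum.inr b) with hRdef
  have hsplit : N.card = W.card + R.card := by
    have h0 := Finset.card_filter_add_card_filter_not
      (s := N) (p := fun w => ∃ a : α, f w = Sum.inl a)
    have e1 : N.filter (fun w => ∃ a : α, f w = Sum.inl a) = W := by
      rw [hNdef, hWdef, Finset.filter_filter]
    have e2 : N.filter (fun w => ¬ ∃ a : α, f w = Sum.inl a) = R := by
      rw [hNdef, hRdef, Finset.filter_filter]
      apply Finset.filter_congr
      intro w _
      exact and_congr_right fun _ => by cases hfw : f w <;> simp [hfw]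
    rw [e1, e2] at h0
    omega
  have hNcard : p * (δ - 1) + 1 ≤ N.card := by
    have h := tree_nbhd_bound T hT r δ P (Finset.card_pos.mp (by omega)) hrP
      (fun u hu => hδmin u (hPA hu))
    rwa [hP] at h
  set S := P.image bu with hSdef
  have hScard : S.card = p := by
    rw [hSdef, ← hP]
    apply Finset.card_image_of_injOn
    intro x hx y hy hxy
    apply hinj
    rw [hbuspec x hx, hbuspec y hy, hxy]
  have hRcard : R.card ≤ (S.biUnion fun b => H₂.neighborFinset b).card := by
    have h1 : R.image f ⊆ (S.biUnion fun b => H₂.neighborFinset b).image Sum.inr := by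
      intro x hx
      obtain ⟨w, hw, rfl⟩ := Finset.mem_image.mp hx
      obtain ⟨⟨u, hu, hadj⟩, b, hb⟩ := (Finset.mem_filter.mp hw).2
      have hadj2 := hhom hadj
      rw [hbuspec u hu, hb] at hadj2
      refine Finset.mem_image.mpr ⟨b, ?_, hb.symm⟩
      exact Finset.mem_biUnion.mpr ⟨bu u, Finset.mem_image.mpr ⟨u, hu, rfl⟩,
        (H₂.mem_neighborFinset _ _).mpr hadj2⟩
    calc R.card = (R.image f).card := (Finset.card_image_of_injOn hinj.injOn).symm
      _ ≤ ((S.biUnion fun b => H₂.neighborFinset b).image Sum.inr).card :=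
          Finset.card_le_card h1
      _ = (S.biUnion fun b => H₂.neighborFinset b).card :=
          Finset.card_image_of_injective _ Sum.inr_injective
  have hsum : (S.biUnion fun b => H₂.neighborFinset b).card ≤ ∑ b ∈ S, H₂.degree b :=
    le_trans Finset.card_biUnion_le
      (le_of_eq (Finset.sum_congr rfl fun b _ => H₂.card_neighborFinset_eq_degree b))
  have hsb := sum_deg_bound H₂ δ hmax hone S
  rw [hScard] at hsb
  have hRle : R.card ≤ (δ - 1) + (p - 1) * (δ - 2) := le_trans hRcard (le_trans hsum hsb)
  by_cases hδ2 : 2 ≤ δ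
  · obtain ⟨e, rfl⟩ : ∃ e, δ = e + 2 := ⟨δ - 2, by omega⟩
    obtain ⟨q, rfl⟩ : ∃ q, p = q + 1 := ⟨p - 1, by omega⟩
    have h1 : (q + 1) * (e + 1) + 1 ≤ W.card + R.card := by
      rw [← hsplit]; exact hNcard
    have h2 : R.card ≤ (e + 1) + q * e := hRle
    have h3 : (q + 1) * (e + 1) = q * e + q + e + 1 := by ring
    rw [h3] at h1
    generalize q * e = m at h1 h2
    omega
  · have hpone : p = 1 := by
      by_contra hne
      have hp2 : 2 ≤ S.card := by omega
      obtain ⟨b₁, hb₁, b₂, hb₂, hbne⟩ := Finset.one_lt_card.mp hp2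
      have e1 : H₂.degree b₁ = δ - 1 := by have := hmax b₁; omega
      have e2 : H₂.degree b₂ = δ - 1 := by have := hmax b₂; omega
      exact hbne (hone b₁ b₂ e1 e2)
    rw [hpone] at hRle hNcard ⊢
    have hR0 : R.card ≤ δ - 1 := by simpa using hRle
    have hN1 : δ - 1 + 1 ≤ N.card := by simpa using hNcard
    omega
end
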